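/- A 3×3 complex matrix A is unitary if and only if there exist angles α, β, γ ∈ [0, 2π] and complex numbers z, λ₁, λ₂, λ₃, λ₄, λ₅, each of modulus 1, such that A = diag(λ₁, λ₂, λ₃) · X_β · Y^z_α · X_γ · diag(1, λ₄, λ₅), where X_φ is the 3×3 matrix with rows (1,0,0), (0, cos φ, −sin φ), (0, sin φ, cos φ), and Y^z_φ is the 3×3 matrix with rows (cos φ, 0, −sin φ), (0, z, 0), (sin φ, 0, cos φ). -/

import Mathlib

open Real

/-- The rotation `X_φ` about the first coordinate axis. -/
noncomputable def Xrot (φ : ℝ) : Matrix (Fin 3) (Fin 3) ℂ :=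
  !![1, 0, 0;
     0, (Real.cos φ : ℂ), (-(Real.sin φ) : ℝ);
     0, (Real.sin φ : ℂ), (Real.cos φ : ℂ)]

/-- The twisted rotation `Y^z_φ`. -/
noncomputable def Yrot (z : ℂ) (φ : ℝ) : Matrix (Fin 3) (Fin 3) ℂ :=
  !![(Real.cos φ : ℂ), 0, (-(Real.sin φ) : ℝ);
     0, z, 0;
     (Real.sin φ : ℂ), 0, (Real.cos φ : ℂ)]

noncomputable def ph (x : ℂ) : ℂ := if x = 0 then 1 else x / ‖x‖

lemma ph_abs (x : ℂ) : ‖ph x‖ = 1 := by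
  unfold ph
  split_ifs with h
  · simp
  · simp [map_div₀, Complex.norm_real, abs_of_nonneg (norm_nonneg x),
      div_self (norm_ne_zero_iff.mpr h)]

lemma ph_mul_abs (x : ℂ) : ph x * (‖x‖ : ℂ) = x := by
  unfold ph
  split_ifs with h
  · simp [h]
  · exact div_mul_cancel₀ x (by exact_mod_cast (norm_ne_zero_iff.mpr h))

lemma unimod_mul_conj {z : ℂ} (h : ‖z‖ = 1) : z * (starRingEnd ℂ) z = 1 := by
  rw [Complex.mul_conj]
  norm_cast
  rw [Complex.normSq_eq_norm_sq, h]; norm_num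

lemma conj_mul_unimod {z : ℂ} (h : ‖z‖ = 1) : (starRingEnd ℂ) z * z = 1 := by
  rw [mul_comm]; exact unimod_mul_conj h

lemma unimod_ne_zero {z : ℂ} (h : ‖z‖ = 1) : z ≠ 0 := by
  intro h0; rw [h0] at h; simp at h

lemma abs_eq_one_of_conj_mul {z : ℂ} (h : (starRingEnd ℂ) z * z = 1) : ‖z‖ = 1 := by
  have h2 : (Complex.normSq z : ℂ) = 1 := by rw [Complex.normSq_eq_conj_mul_self, h]
  have h3 : Complex.normSq z = 1 := by exact_mod_cast h2
  have h4 : ‖z‖ ^ 2 = 1 := by rw [← Complex.normSq_eq_norm_sq, h3]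
  nlinarith [norm_nonneg z]

lemma Xrot_mem (φ : ℝ) : Xrot φ ∈ Matrix.unitaryGroup (Fin 3) ℂ := by
  rw [Matrix.mem_unitaryGroup_iff]
  ext i j
  fin_cases i <;> fin_cases j <;>
    simp [Xrot, Matrix.mul_apply, Fin.sum_univ_three, Matrix.star_apply, Matrix.one_apply,
      Complex.conj_ofReal] <;>
    simp only [← Complex.ofReal_cos, ← Complex.ofReal_sin, Complex.conj_ofReal] <;>
    norm_cast <;> ring_nf <;>
    simp [Real.sin_sq_add_cos_sq, Real.cos_sq_add_sin_sq]

lemma Yrot_mem {z : ℂ} (hz : ‖z‖ = 1) (φ : ℝ) :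
    Yrot z φ ∈ Matrix.unitaryGroup (Fin 3) ℂ := by
  rw [Matrix.mem_unitaryGroup_iff]
  ext i j
  fin_cases i <;> fin_cases j <;>
    simp [Yrot, Matrix.mul_apply, Fin.sum_univ_three, Matrix.star_apply, Matrix.one_apply,
      Complex.conj_ofReal, unimod_mul_conj hz] <;>
    simp only [← Complex.ofReal_cos, ← Complex.ofReal_sin, Complex.conj_ofReal] <;>
    norm_cast <;> ring_nf <;>
    simp [Real.sin_sq_add_cos_sq, Real.cos_sq_add_sin_sq]

lemma diag_mem {a b c : ℂ} (ha : ‖a‖ = 1) (hb : ‖b‖ = 1)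
    (hc : ‖c‖ = 1) :
    Matrix.diagonal ![a, b, c] ∈ Matrix.unitaryGroup (Fin 3) ℂ := by
  rw [Matrix.mem_unitaryGroup_iff]
  ext i j
  fin_cases i <;> fin_cases j <;>
    simp [Matrix.mul_apply, Fin.sum_univ_three, Matrix.star_apply, Matrix.one_apply,
      Matrix.diagonal, unimod_mul_conj ha, unimod_mul_conj hb, unimod_mul_conj hc]

lemma Xrot_mul_neg (φ : ℝ) : Xrot φ * Xrot (-φ) = 1 := by
  ext i j
  fin_cases i <;> fin_cases j <;>
    simp [Xrot, Matrix.mul_apply, Fin.sum_univ_three, Matrix.one_apply,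
      Matrix.vecHead, Matrix.vecTail] <;>
    (try norm_cast) <;> (try ring_nf) <;>
    (try simp [Real.sin_sq_add_cos_sq, Real.cos_sq_add_sin_sq])

lemma diag3_mul_eq_one {a b c a' b' c' : ℂ} (h1 : a * a' = 1) (h2 : b * b' = 1)
    (h3 : c * c' = 1) :
    Matrix.diagonal ![a, b, c] * Matrix.diagonal ![a', b', c'] = 1 := by
  ext i j
  fin_cases i <;> fin_cases j <;>
    simp [Matrix.mul_apply, Fin.sum_univ_three, Matrix.diagonal, Matrix.one_apply, h1, h2, h3]

lemma yrot_forced {C : Matrix (Fin 3) (Fin 3) ℂ} (hC : C ∈ Matrix.unitaryGroup (Fin 3) ℂ)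
    {α : ℝ} (hs : Real.sin α ≠ 0)
    (h00 : C 0 0 = (Real.cos α : ℂ)) (h01 : C 0 1 = 0) (h02 : C 0 2 = -(Real.sin α : ℂ))
    (h10 : C 1 0 = 0) (h20 : C 2 0 = (Real.sin α : ℂ)) :
    C = Yrot (C 1 1) α ∧ ‖C 1 1‖ = 1 := by
  have hsc : ((Real.sin α : ℂ)) ≠ 0 := by exact_mod_cast hs
  have e1 := hC.1
  have e2 := hC.2
  have q01 : (star C * C) 0 1 = (1 : Matrix (Fin 3) (Fin 3) ℂ) 0 1 := by rw [e1]
  have q02 : (star C * C) 0 2 = (1 : Matrix (Fin 3) (Fin 3) ℂ) 0 2 := by rw [e1]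
  have q10 : (C * star C) 1 0 = (1 : Matrix (Fin 3) (Fin 3) ℂ) 1 0 := by rw [e2]
  have q11 : (star C * C) 1 1 = (1 : Matrix (Fin 3) (Fin 3) ℂ) 1 1 := by rw [e1]
  simp [Matrix.mul_apply, Fin.sum_univ_three, Matrix.star_apply, Matrix.one_apply,
    h00, h01, h02, h10, h20, Complex.conj_ofReal] at q01 q02 q10 q11
  simp only [← Complex.ofReal_sin, ← Complex.ofReal_cos, Complex.conj_ofReal] at q01 q02 q10 q11
  have hC21 : C 2 1 = 0 := q01.resolve_left hsc
  have hC12 : C 1 2 = 0 := q10.resolve_right hsc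
  have hC22 : C 2 2 = (Real.cos α : ℂ) :=
    mul_left_cancel₀ hsc (by linear_combination q02)
  rw [hC21] at q11
  simp at q11
  refine ⟨?_, abs_eq_one_of_conj_mul q11⟩
  ext i j
  fin_cases i <;> fin_cases j <;>
    simp [Yrot, h00, h01, h02, h10, h20, hC21, hC12, hC22]

lemma real_of_three {x y z : ℂ}
    (h : (starRingEnd ℂ) x * x + (starRingEnd ℂ) y * y + (starRingEnd ℂ) z * z = 1) :
    ‖x‖ ^ 2 + ‖y‖ ^ 2 + ‖z‖ ^ 2 = 1 := by
  have h' : ((Complex.normSq x : ℂ)) + (Complex.normSq y : ℂ) + (Complex.normSq z : ℂ) = 1 := by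
    rw [Complex.normSq_eq_conj_mul_self, Complex.normSq_eq_conj_mul_self,
      Complex.normSq_eq_conj_mul_self]; exact h
  have h'' : Complex.normSq x + Complex.normSq y + Complex.normSq z = 1 := by exact_mod_cast h'
  simpa [Complex.normSq_eq_norm_sq] using h''

set_option maxHeartbeats 2000000 in
/-- Euler-type parametrization of `U(3)`: `A` is unitary iff
`A = diag(λ₁,λ₂,λ₃) · X_β · Y^z_α · X_γ · diag(1,λ₄,λ₅)` with angles in `[0,2π]`
and unimodular `z, λ₁, …, λ₅`. -/
theorem u3_euler_parametrization (A : Matrix (Fin 3) (Fin 3) ℂ) :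
    A ∈ Matrix.unitaryGroup (Fin 3) ℂ ↔
      ∃ α β γ : ℝ, α ∈ Set.Icc 0 (2 * π) ∧ β ∈ Set.Icc 0 (2 * π) ∧
        γ ∈ Set.Icc 0 (2 * π) ∧
      ∃ z l₁ l₂ l₃ l₄ l₅ : ℂ, ‖z‖ = 1 ∧ ‖l₁‖ = 1 ∧
        ‖l₂‖ = 1 ∧ ‖l₃‖ = 1 ∧ ‖l₄‖ = 1 ∧
        ‖l₅‖ = 1 ∧
        A = Matrix.diagonal ![l₁, l₂, l₃] * Xrot β * Yrot z α * Xrot γ *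
              Matrix.diagonal ![1, l₄, l₅] := by
  constructor
  · intro hA
    have hsA : ∀ i j : Fin 3, (starRingEnd ℂ) (A 0 i) * A 0 j + (starRingEnd ℂ) (A 1 i) * A 1 j +
        (starRingEnd ℂ) (A 2 i) * A 2 j = if i = j then (1:ℂ) else 0 := by
      intro i j
      have h : (star A * A) i j = (1 : Matrix (Fin 3) (Fin 3) ℂ) i j := by rw [hA.1]
      simpa [Matrix.mul_apply, Fin.sum_univ_three, Matrix.star_apply, Matrix.one_apply] using h
    have hAs : ∀ i j : Fin 3, A i 0 * (starRingEnd ℂ) (A j 0) + A i 1 * (starRingEnd ℂ) (A j 1) +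
        A i 2 * (starRingEnd ℂ) (A j 2) = if i = j then (1:ℂ) else 0 := by
      intro i j
      have h : (A * star A) i j = (1 : Matrix (Fin 3) (Fin 3) ℂ) i j := by rw [hA.2]
      simpa [Matrix.mul_apply, Fin.sum_univ_three, Matrix.star_apply, Matrix.one_apply] using h
    have rcol0 : ‖A 0 0‖ ^ 2 + ‖A 1 0‖ ^ 2 + ‖A 2 0‖ ^ 2 = 1 := by
      have := hsA 0 0; simp at this; exact real_of_three this
    have rrow0 : ‖A 0 0‖ ^ 2 + ‖A 0 1‖ ^ 2 + ‖A 0 2‖ ^ 2 = 1 := by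
      have := hAs 0 0; simp at this
      exact real_of_three (by linear_combination this)
    set c : ℝ := ‖A 0 0‖ with hc
    have hc0 : 0 ≤ c := norm_nonneg _
    have hc1 : c ≤ 1 := by nlinarith [norm_nonneg (A 1 0), norm_nonneg (A 2 0)]
    set α : ℝ := Real.arccos c with hαdef
    have hαI : α ∈ Set.Icc 0 (2 * π) :=
      ⟨Real.arccos_nonneg c, le_trans (Real.arccos_le_pi c) (by nlinarith [Real.pi_pos])⟩
    have hcos : Real.cos α = c := Real.cos_arccos (by linarith) hc1
    have hsin0 : 0 ≤ Real.sin α := Real.sin_nonneg_of_nonneg_of_le_pi (Real.arccos_nonneg c) (Real.arccos_le_pi c)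
    have hs2 : Real.sin α ^ 2 = 1 - c ^ 2 := by
      have := Real.sin_sq_add_cos_sq α; rw [hcos] at this; linarith
    by_cases hs : Real.sin α = 0
    · -- degenerate case : |A 0 0| = 1
      have hc1' : c = 1 := by nlinarith
      have z10 : A 1 0 = 0 := by
        have h0 : ‖A 1 0‖ = 0 := by
          nlinarith [norm_nonneg (A 1 0), norm_nonneg (A 2 0)]
        exact norm_eq_zero.1 h0
      have z20 : A 2 0 = 0 := by
        have h0 : ‖A 2 0‖ = 0 := by
          nlinarith [norm_nonneg (A 1 0), norm_nonneg (A 2 0)]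
        exact norm_eq_zero.1 h0
      have z01 : A 0 1 = 0 := by
        have h0 : ‖A 0 1‖ = 0 := by
          nlinarith [norm_nonneg (A 0 1), norm_nonneg (A 0 2)]
        exact norm_eq_zero.1 h0
      have z02 : A 0 2 = 0 := by
        have h0 : ‖A 0 2‖ = 0 := by
          nlinarith [norm_nonneg (A 0 1), norm_nonneg (A 0 2)]
        exact norm_eq_zero.1 h0
      have n1 : (starRingEnd ℂ) (A 1 1) * A 1 1 + (starRingEnd ℂ) (A 2 1) * A 2 1 = 1 := by
        have h := hsA 1 1; rw [z01] at h; simpa using h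
      have n2 : (starRingEnd ℂ) (A 1 2) * A 1 2 + (starRingEnd ℂ) (A 2 2) * A 2 2 = 1 := by
        have h := hsA 2 2; rw [z02] at h; simpa using h
      have horth : (starRingEnd ℂ) (A 1 1) * A 1 2 + (starRingEnd ℂ) (A 2 1) * A 2 2 = 0 := by
        have h := hsA 1 2; rw [z01] at h; simpa using h
      set w := A 1 1 * A 2 2 - A 1 2 * A 2 1 with hwdef
      have hw1 : w * (starRingEnd ℂ) (A 1 1) = A 2 2 := by
        rw [hwdef]; linear_combination (A 2 2) * n1 - (A 2 1) * horth
      have hw2 : w * (starRingEnd ℂ) (A 2 1) = -(A 1 2) := by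
        rw [hwdef]; linear_combination (-(A 1 2)) * n1 + (A 1 1) * horth
      have r1 : ‖A 1 1‖ ^ 2 + ‖A 2 1‖ ^ 2 = 1 := by
        have h := real_of_three (by simpa using hsA 1 1)
        rw [z01] at h; simpa using h
      have r2 : ‖A 1 2‖ ^ 2 + ‖A 2 2‖ ^ 2 = 1 := by
        have h := real_of_three (by simpa using hsA 2 2)
        rw [z02] at h; simpa using h
      have e1' : ‖w‖ ^ 2 * ‖A 1 1‖ ^ 2 = ‖A 2 2‖ ^ 2 := by
        rw [← mul_pow]
        rw [show ‖w‖ * ‖A 1 1‖ = ‖A 2 2‖ from by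
          have h := congrArg (‖·‖) hw1; simpa [map_mul] using h]
      have e2' : ‖w‖ ^ 2 * ‖A 2 1‖ ^ 2 = ‖A 1 2‖ ^ 2 := by
        rw [← mul_pow]
        rw [show ‖w‖ * ‖A 2 1‖ = ‖A 1 2‖ from by
          have h := congrArg (‖·‖) hw2; simpa [map_mul] using h]
      have habsw : ‖w‖ = 1 := by
        have h2 : ‖w‖ ^ 2 = 1 := by nlinarith
        nlinarith [norm_nonneg w]
      set β := Real.arcsin (‖A 2 1‖) with hβdef
      have h21le : ‖A 2 1‖ ≤ 1 := by nlinarith [norm_nonneg (A 2 1), norm_nonneg (A 1 1)]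
      have hβI : β ∈ Set.Icc 0 (2 * π) :=
        ⟨Real.arcsin_nonneg.2 (norm_nonneg _), le_trans (Real.arcsin_le_pi_div_two _)
          (by nlinarith [Real.pi_pos])⟩
      have hsinβ : Real.sin β = ‖A 2 1‖ :=
        Real.sin_arcsin (by linarith [norm_nonneg (A 2 1)]) h21le
      have hcosβ : Real.cos β = ‖A 1 1‖ := by
        rw [hβdef, Real.cos_arcsin,
          show 1 - ‖A 2 1‖ ^ 2 = ‖A 1 1‖ ^ 2 by linarith]
        exact Real.sqrt_sq (norm_nonneg _)
      have hsinα : ((Real.sin α : ℝ) : ℂ) = 0 := by rw [hs]; simp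
      have hcosα : ((Real.cos α : ℝ) : ℂ) = 1 := by rw [hcos, hc1']; simp
      have eA00 : A 0 0 = ph (A 0 0) := by
        conv_lhs => rw [← ph_mul_abs (A 0 0)]
        rw [← hc, hc1']; simp
      have hca : (starRingEnd ℂ) (ph (A 1 1)) * ((‖A 1 1‖ : ℝ) : ℂ) =
          (starRingEnd ℂ) (A 1 1) := by
        have h := congrArg (starRingEnd ℂ) (ph_mul_abs (A 1 1))
        simpa [map_mul, Complex.conj_ofReal] using h
      have hcc : (starRingEnd ℂ) (ph (A 2 1)) * ((‖A 2 1‖ : ℝ) : ℂ) =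
          (starRingEnd ℂ) (A 2 1) := by
        have h := congrArg (starRingEnd ℂ) (ph_mul_abs (A 2 1))
        simpa [map_mul, Complex.conj_ofReal] using h
      refine ⟨α, β, 0, hαI, hβI, ⟨le_refl 0, by nlinarith [Real.pi_pos]⟩,
        ph (A 1 1), ph (A 0 0), 1, ph (A 2 1) * (starRingEnd ℂ) (ph (A 1 1)), 1,
        w * (starRingEnd ℂ) (ph (A 2 1)), ph_abs _, ph_abs _, by simp,
        by simp [map_mul, Complex.norm_conj, ph_abs], by simp,
        by simp [map_mul, Complex.norm_conj, ph_abs, habsw], ?_⟩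
      ext i j
      fin_cases i <;> fin_cases j <;>
        simp only [Matrix.mul_apply, Fin.sum_univ_three, Matrix.mul_diagonal,
          Matrix.diagonal_mul] <;>
        simp [Xrot, Yrot, Matrix.vecHead, Matrix.vecTail, z10, z20, z01, z02] <;>
        (try simp only [← Complex.ofReal_cos, ← Complex.ofReal_sin]) <;>
        simp [hsinα, hcosα, hsinβ, hcosβ]
      · exact eA00
      · rw [mul_comm]; exact (ph_mul_abs _).symm
      · linear_combination hw2 + w * hcc
      · linear_combination (-1 : ℂ) * ph_mul_abs (A 2 1) +
          (-(ph (A 2 1) * ((‖A 2 1‖ : ℝ) : ℂ))) * conj_mul_unimod (ph_abs (A 1 1))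
      · linear_combination (-1 : ℂ) * hw1 + (-w) * hca +
          (-(w * (starRingEnd ℂ) (ph (A 1 1)) * ((‖A 1 1‖ : ℝ) : ℂ))) *
            unimod_mul_conj (ph_abs (A 2 1))

    · -- main case
      have hsp : 0 < Real.sin α := lt_of_le_of_ne hsin0 (Ne.symm hs)
      have h10n : ‖A 1 0‖ ^ 2 + ‖A 2 0‖ ^ 2 = Real.sin α ^ 2 := by
        rw [hs2]; linarith [rcol0]
      have h01n : ‖A 0 1‖ ^ 2 + ‖A 0 2‖ ^ 2 = Real.sin α ^ 2 := by
        rw [hs2]; linarith [rrow0]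
      set s : ℝ := Real.sin α with hsdef
      set β := Real.arcsin (‖A 1 0‖ / s) with hβdef
      have hble : ‖A 1 0‖ / s ≤ 1 := by
        rw [div_le_one hsp]
        nlinarith [norm_nonneg (A 1 0), norm_nonneg (A 2 0)]
      have hb0 : 0 ≤ ‖A 1 0‖ / s := div_nonneg (norm_nonneg _) hsp.le
      have hβI : β ∈ Set.Icc 0 (2 * π) :=
        ⟨Real.arcsin_nonneg.2 hb0, le_trans (Real.arcsin_le_pi_div_two _)
          (by nlinarith [Real.pi_pos])⟩
      have hsinβ : Real.sin β = ‖A 1 0‖ / s :=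
        Real.sin_arcsin (by linarith) hble
      have hcosβ : Real.cos β = ‖A 2 0‖ / s := by
        rw [hβdef, Real.cos_arcsin]
        rw [show 1 - (‖A 1 0‖ / s) ^ 2 = (‖A 2 0‖ / s) ^ 2 by
          field_simp; linarith [h10n]]
        exact Real.sqrt_sq (div_nonneg (norm_nonneg _) hsp.le)
      set γ := Real.arcsin (‖A 0 1‖ / s) with hγdef
      have hgle : ‖A 0 1‖ / s ≤ 1 := by
        rw [div_le_one hsp]
        nlinarith [norm_nonneg (A 0 1), norm_nonneg (A 0 2)]
      have hg0 : 0 ≤ ‖A 0 1‖ / s := div_nonneg (norm_nonneg _) hsp.le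
      have hγI : γ ∈ Set.Icc 0 (2 * π) :=
        ⟨Real.arcsin_nonneg.2 hg0, le_trans (Real.arcsin_le_pi_div_two _)
          (by nlinarith [Real.pi_pos])⟩
      have hsinγ : Real.sin γ = ‖A 0 1‖ / s :=
        Real.sin_arcsin (by linarith) hgle
      have hcosγ : Real.cos γ = ‖A 0 2‖ / s := by
        rw [hγdef, Real.cos_arcsin]
        rw [show 1 - (‖A 0 1‖ / s) ^ 2 = (‖A 0 2‖ / s) ^ 2 by
          field_simp; linarith [h01n]]
        exact Real.sqrt_sq (div_nonneg (norm_nonneg _) hsp.le)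
      -- phases
      set l1 := ph (A 0 0) with hl1
      set l2 := -ph (A 1 0) with hl2
      set l3 := ph (A 2 0) with hl3
      set l4 := -((starRingEnd ℂ) l1 * ph (A 0 1)) with hl4
      set l5 := -((starRingEnd ℂ) l1 * ph (A 0 2)) with hl5
      have a1 : ‖l1‖ = 1 := ph_abs _
      have a2 : ‖l2‖ = 1 := by rw [hl2]; simp [ph_abs]
      have a3 : ‖l3‖ = 1 := ph_abs _
      have a4 : ‖l4‖ = 1 := by rw [hl4]; simp [ph_abs, a1]
      have a5 : ‖l5‖ = 1 := by rw [hl5]; simp [ph_abs, a1]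
      -- entry values
      have eA00 : A 0 0 = l1 * (c : ℂ) := by rw [hl1, hc]; exact (ph_mul_abs _).symm
      have habs10 : ‖A 1 0‖ = s * Real.sin β := by rw [hsinβ]; field_simp
      have habs20 : ‖A 2 0‖ = s * Real.cos β := by rw [hcosβ]; field_simp
      have habs01 : ‖A 0 1‖ = s * Real.sin γ := by rw [hsinγ]; field_simp
      have habs02 : ‖A 0 2‖ = s * Real.cos γ := by rw [hcosγ]; field_simp
      have eA10 : A 1 0 = -(l2 * ((s * Real.sin β : ℝ) : ℂ)) := by
        rw [hl2, ← habs10]; simp [ph_mul_abs]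
      have eA20 : A 2 0 = l3 * ((s * Real.cos β : ℝ) : ℂ) := by
        rw [hl3, ← habs20]; exact (ph_mul_abs _).symm
      have eA01 : A 0 1 = -(l1 * ((s * Real.sin γ : ℝ) : ℂ) * l4) := by
        rw [hl4, ← habs01]
        linear_combination (-1 : ℂ) * ph_mul_abs (A 0 1) +
          (-(ph (A 0 1) * ((‖A 0 1‖ : ℝ) : ℂ))) * unimod_mul_conj a1
      have eA02 : A 0 2 = -(l1 * ((s * Real.cos γ : ℝ) : ℂ) * l5) := by
        rw [hl5, ← habs02]
        linear_combination (-1 : ℂ) * ph_mul_abs (A 0 2) +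
          (-(ph (A 0 2) * ((‖A 0 2‖ : ℝ) : ℂ))) * unimod_mul_conj a1
      -- the conjugate diagonal matrices
      set D1' : Matrix (Fin 3) (Fin 3) ℂ :=
        Matrix.diagonal ![(starRingEnd ℂ) l1, (starRingEnd ℂ) l2, (starRingEnd ℂ) l3] with hD1'
      set D2' : Matrix (Fin 3) (Fin 3) ℂ :=
        Matrix.diagonal ![1, (starRingEnd ℂ) l4, (starRingEnd ℂ) l5] with hD2'
      set Cm := Xrot (-β) * (D1' * A * D2') * Xrot (-γ) with hCmdef
      have hCmem : Cm ∈ Matrix.unitaryGroup (Fin 3) ℂ := by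
        rw [hCmdef, hD1', hD2']
        exact mul_mem (mul_mem (Xrot_mem _) (mul_mem (mul_mem
          (diag_mem (by simp [a1]) (by simp [a2]) (by simp [a3])) hA)
          (diag_mem (by simp) (by simp [a4]) (by simp [a5])))) (Xrot_mem _)
      have i1 : (starRingEnd ℂ) l1 = l1⁻¹ := (Complex.inv_eq_conj a1).symm
      have i2 : (starRingEnd ℂ) l2 = l2⁻¹ := (Complex.inv_eq_conj a2).symm
      have i3 : (starRingEnd ℂ) l3 = l3⁻¹ := (Complex.inv_eq_conj a3).symm
      have i4 : (starRingEnd ℂ) l4 = l4⁻¹ := (Complex.inv_eq_conj a4).symm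
      have i5 : (starRingEnd ℂ) l5 = l5⁻¹ := (Complex.inv_eq_conj a5).symm
      have n1 : l1 ≠ 0 := unimod_ne_zero a1
      have n2 : l2 ≠ 0 := unimod_ne_zero a2
      have n3 : l3 ≠ 0 := unimod_ne_zero a3
      have n4 : l4 ≠ 0 := unimod_ne_zero a4
      have n5 : l5 ≠ 0 := unimod_ne_zero a5
      have b00 : Cm 0 0 = ((Real.cos α : ℝ) : ℂ) := by
        rw [hCmdef, hD1', hD2', hcos]
        simp only [Matrix.mul_apply, Fin.sum_univ_three, Matrix.mul_diagonal,
          Matrix.diagonal_mul]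
        simp [Xrot, Matrix.vecHead, Matrix.vecTail]
        try simp only [← Complex.ofReal_cos, ← Complex.ofReal_sin]
        rw [eA00, i1]
        field_simp
      have b01 : Cm 0 1 = 0 := by
        rw [hCmdef, hD1', hD2']
        simp only [Matrix.mul_apply, Fin.sum_univ_three, Matrix.mul_diagonal,
          Matrix.diagonal_mul]
        simp [Xrot, Matrix.vecHead, Matrix.vecTail]
        try simp only [← Complex.ofReal_cos, ← Complex.ofReal_sin]
        rw [eA01, eA02, i1, i4, i5]
        field_simp
        push_cast
        ring
      have b02 : Cm 0 2 = -((Real.sin α : ℝ) : ℂ) := by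
        rw [hCmdef, hD1', hD2', ← hsdef]
        simp only [Matrix.mul_apply, Fin.sum_univ_three, Matrix.mul_diagonal,
          Matrix.diagonal_mul]
        simp [Xrot, Matrix.vecHead, Matrix.vecTail]
        try simp only [← Complex.ofReal_cos, ← Complex.ofReal_sin]
        rw [eA01, eA02, i1, i4, i5]
        have htr : (Real.sin γ : ℂ) ^ 2 + (Real.cos γ : ℂ) ^ 2 = 1 := by
          exact_mod_cast Real.sin_sq_add_cos_sq γ
        clear_value l1 l2 l3 l4 l5
        field_simp
        try simp only [← Complex.ofReal_cos, ← Complex.ofReal_sin]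
        push_cast at htr ⊢
        linear_combination (-(s : ℂ)) * htr
      have b10 : Cm 1 0 = 0 := by
        rw [hCmdef, hD1', hD2']
        simp only [Matrix.mul_apply, Fin.sum_univ_three, Matrix.mul_diagonal,
          Matrix.diagonal_mul]
        simp [Xrot, Matrix.vecHead, Matrix.vecTail]
        try simp only [← Complex.ofReal_cos, ← Complex.ofReal_sin]
        rw [eA10, eA20, i2, i3]
        field_simp
        push_cast
        ring
      have b20 : Cm 2 0 = ((Real.sin α : ℝ) : ℂ) := by
        rw [hCmdef, hD1', hD2', ← hsdef]
        simp only [Matrix.mul_apply, Fin.sum_univ_three, Matrix.mul_diagonal,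
          Matrix.diagonal_mul]
        simp [Xrot, Matrix.vecHead, Matrix.vecTail]
        try simp only [← Complex.ofReal_cos, ← Complex.ofReal_sin]
        rw [eA10, eA20, i2, i3]
        have htr : (Real.sin β : ℂ) ^ 2 + (Real.cos β : ℂ) ^ 2 = 1 := by
          exact_mod_cast Real.sin_sq_add_cos_sq β
        clear_value l1 l2 l3 l4 l5
        field_simp
        try simp only [← Complex.ofReal_cos, ← Complex.ofReal_sin]
        push_cast at htr ⊢
        linear_combination (s : ℂ) * htr
      obtain ⟨hforced, habsz⟩ := yrot_forced hCmem hs b00 b01 b02 b10 b20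
      refine ⟨α, β, γ, hαI, hβI, hγI, Cm 1 1, l1, l2, l3, l4, l5, habsz,
        a1, a2, a3, a4, a5, ?_⟩
      have hXβ : Xrot β * Xrot (-β) = 1 := Xrot_mul_neg β
      have hXγ : Xrot (-γ) * Xrot γ = 1 := by simpa using Xrot_mul_neg (-γ)
      have hD1 : Matrix.diagonal ![l1, l2, l3] * D1' = 1 := by
        rw [hD1']
        exact diag3_mul_eq_one (unimod_mul_conj a1) (unimod_mul_conj a2) (unimod_mul_conj a3)
      have hD2 : D2' * Matrix.diagonal ![(1 : ℂ), l4, l5] = 1 := by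
        rw [hD2']
        exact diag3_mul_eq_one (by simp) (conj_mul_unimod a4) (conj_mul_unimod a5)
      rw [← hforced, hCmdef]
      simp only [Matrix.mul_assoc]
      rw [show Xrot (-γ) * (Xrot γ * Matrix.diagonal ![(1 : ℂ), l4, l5]) =
            Matrix.diagonal ![(1 : ℂ), l4, l5] from by rw [← Matrix.mul_assoc, hXγ, Matrix.one_mul]]
      rw [hD2, Matrix.mul_one]
      rw [show Xrot β * (Xrot (-β) * (D1' * A)) = D1' * A from by
        rw [← Matrix.mul_assoc, hXβ, Matrix.one_mul]]
      rw [← Matrix.mul_assoc, hD1, Matrix.one_mul]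

  · rintro ⟨α, β, γ, -, -, -, z, l1, l2, l3, l4, l5, hz, h1, h2, h3, h4, h5, rfl⟩
    exact mul_mem (mul_mem (mul_mem (mul_mem (diag_mem h1 h2 h3) (Xrot_mem β))
      (Yrot_mem hz α)) (Xrot_mem γ)) (diag_mem (by simp) h4 h5)
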